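/- Let ψ₀ be a SIC fiducial vector in odd dimension d and let P_θ be the associated generalised parity operator. Then P_θ is Hermitian, P_θ² = 1_d, and Tr(P_θ) = 1; consequently P_θ has eigenvalues ±1, the eigenspace for eigenvalue +1 has dimension (d+1)/2, and the eigenspace for eigenvalue −1 has dimension (d−1)/2. -/

import Mathlib

set_option linter.unusedSectionVars false
set_option linter.unusedVariables false
set_option linter.unreachableTactic false
set_option linter.unusedTactic false
set_option maxHeartbeats 1600000

open Matrix Complex

/-- `τ = -exp(iπ/d)`. -/
noncomputable def tau (d : ℕ) : ℂ := -Complex.exp (Real.pi * Complex.I / d)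

/-- The displacement operator `D_p = D_{i,j}`, with `(r,s)` entry
`τ^{ij+2js} δ_{r,s+i}` (exponents of the `d`-th root of unity `τ` taken mod `d`). -/
noncomputable def Disp (d : ℕ) [NeZero d] (p : ZMod d × ZMod d) :
    Matrix (ZMod d) (ZMod d) ℂ :=
  Matrix.of fun r s =>
    tau d ^ ((p.1 * p.2 + 2 * p.2 * s).val) * (if r = s + p.1 then 1 else 0)

/-- The standard Hermitian inner product `⟨x, y⟩`, antilinear in the first slot. -/
noncomputable def cInner {n : Type*} [Fintype n] (x y : n → ℂ) : ℂ :=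
  ∑ k, star (x k) * y k

/-- `Hp = (i, 2⁻¹j)` for `p = (i,j)`. -/
def Hmap (d : ℕ) [NeZero d] (p : ZMod d × ZMod d) : ZMod d × ZMod d :=
  (p.1, (2 : ZMod d)⁻¹ * p.2)

/-- The squared SIC overlap phase `e^{2iθ_q}`. -/
noncomputable def sqPhase (d : ℕ) [NeZero d] (ψ₀ : ZMod d → ℂ)
    (q : ZMod d × ZMod d) : ℂ :=
  if q = 0 then 1 else ((d : ℂ) + 1) * (cInner ψ₀ ((Disp d q).mulVec ψ₀)) ^ 2

/-- The generalised parity operator `P_θ = (1/d)·Σ_p e^{2iθ_{Hp}} D_{-p}`. -/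
noncomputable def genParity (d : ℕ) [NeZero d] (ψ₀ : ZMod d → ℂ) :
    Matrix (ZMod d) (ZMod d) ℂ :=
  ((d : ℂ)⁻¹) • ∑ p : ZMod d × ZMod d, sqPhase d ψ₀ (Hmap d p) • Disp d (-p)


open Matrix Complex Finset

namespace SICAux

variable {d : ℕ} [NeZero d]

noncomputable def tp (d : ℕ) [NeZero d] (a : ZMod d) : ℂ := tau d ^ a.val

lemma tau_ne_zero : tau d ≠ 0 := by
  simp [tau, Complex.exp_ne_zero]

lemma tau_pow_d (hodd : Odd d) : tau d ^ d = 1 := by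
  have hd0 : (d : ℂ) ≠ 0 := Nat.cast_ne_zero.mpr (NeZero.ne d)
  rw [tau, neg_pow, ← Complex.exp_nat_mul]
  have : (d : ℂ) * (Real.pi * Complex.I / d) = Real.pi * Complex.I := by
    field_simp
  rw [this, Complex.exp_pi_mul_I, hodd.neg_one_pow]
  ring

lemma tau_pow_mod (hodd : Odd d) (n : ℕ) : tau d ^ (n % d) = tau d ^ n := by
  conv_rhs => rw [← Nat.mod_add_div n d]
  rw [pow_add, pow_mul, tau_pow_d hodd, one_pow, mul_one]

lemma tp_add (hodd : Odd d) (a b : ZMod d) : tp d (a + b) = tp d a * tp d b := by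
  rw [tp, tp, tp, ZMod.val_add, tau_pow_mod hodd, pow_add]

lemma tp_zero : tp d 0 = 1 := by simp [tp]

lemma tp_ne_zero (a : ZMod d) : tp d a ≠ 0 := pow_ne_zero _ tau_ne_zero

lemma tau_abs : ‖tau d‖ = 1 := by
  have h : (Real.pi : ℂ) * Complex.I / d = ((Real.pi / d : ℝ) : ℂ) * Complex.I := by
    push_cast; ring
  rw [tau, h, norm_neg, Complex.norm_exp_ofReal_mul_I]

lemma tau_mul_star : tau d * star (tau d) = 1 := by
  have : (star (tau d) : ℂ) = (starRingEnd ℂ) (tau d) := rfl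
  rw [this, Complex.mul_conj, ← Complex.sq_norm, tau_abs]
  norm_num

lemma tp_mul_star (a : ZMod d) : tp d a * star (tp d a) = 1 := by
  rw [tp, star_pow, ← mul_pow, tau_mul_star, one_pow]

lemma star_tp (hodd : Odd d) (a : ZMod d) : star (tp d a) = tp d (-a) := by
  have h2 : tp d a * tp d (-a) = 1 := by
    rw [← tp_add hodd]; simp [tp_zero]
  exact mul_left_cancel₀ (tp_ne_zero a) ((tp_mul_star a).trans h2.symm)

lemma isPrimitiveRoot_tau (hodd : Odd d) : IsPrimitiveRoot (tau d) d := by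
  obtain ⟨k, hk⟩ := hodd
  have hd0 : (d : ℂ) ≠ 0 := Nat.cast_ne_zero.mpr (NeZero.ne d)
  have hcop : Nat.Coprime (k + 1) d := by
    rw [← ZMod.isUnit_iff_coprime]
    refine IsUnit.of_mul_eq_one 2 ?_
    have : ((k : ZMod d) + 1) * 2 = (d : ZMod d) + 1 := by
      push_cast [hk]; ring
    simpa [ZMod.natCast_self] using this
  have := Complex.isPrimitiveRoot_exp_of_coprime (k + 1) d (NeZero.ne d) hcop
  convert this using 2
  have harg : 2 * (Real.pi : ℂ) * Complex.I * ((k + 1 : ℕ) / (d : ℂ))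
      = Real.pi * Complex.I + Real.pi * Complex.I / d := by
    field_simp
    push_cast [hk]
    ring
  rw [harg, Complex.exp_add, Complex.exp_pi_mul_I, tau]
  ring

lemma tau_pow_val_ne_one (hodd : Odd d) {c : ZMod d} (hc : c ≠ 0) : tau d ^ c.val ≠ 1 := by
  refine (isPrimitiveRoot_tau hodd).pow_ne_one_of_pos_of_lt ?_ (ZMod.val_lt c)
  exact (fun h => hc (by rwa [← ZMod.val_eq_zero]))

lemma sum_tp (hodd : Odd d) (c : ZMod d) :
    ∑ j : ZMod d, tp d (c * j) = if c = 0 then (d : ℂ) else 0 := by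
  split_ifs with hc
  · subst hc
    simp [tp_zero, card_univ, ZMod.card]
  · have key : ∀ j : ZMod d, tp d (c * j) = (tau d ^ c.val) ^ j.val := by
      intro j
      rw [tp, ZMod.val_mul, tau_pow_mod hodd, pow_mul]
    rw [Finset.sum_congr rfl (fun j _ => key j)]
    rw [show (∑ j : ZMod d, (tau d ^ c.val) ^ j.val)
        = ∑ i ∈ Finset.range d, (tau d ^ c.val) ^ i from
      Finset.sum_nbij' (fun j => j.val) (fun i => (i : ZMod d))
        (fun j _ => Finset.mem_range.mpr (ZMod.val_lt j))
        (fun i _ => Finset.mem_univ _)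
        (fun j _ => ZMod.natCast_rightInverse j)
        (fun i hi => ZMod.val_cast_of_lt (Finset.mem_range.mp hi))
        (fun j _ => rfl)]
    rw [geom_sum_eq (tau_pow_val_ne_one hodd hc)]
    rw [← pow_mul, mul_comm c.val d, pow_mul, tau_pow_d hodd, one_pow]
    simp

lemma two_isUnit (hodd : Odd d) : IsUnit (2 : ZMod d) := by
  have h2 : ((2 : ℕ) : ZMod d) = (2 : ZMod d) := by push_cast; rfl
  rw [← h2, ZMod.isUnit_iff_coprime]
  have hmod : d % 2 = 1 := Nat.odd_iff.mp hodd
  rw [Nat.Prime.coprime_iff_not_dvd Nat.prime_two]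
  rintro ⟨c, rfl⟩
  omega

lemma two_mul_eq_zero_iff (hodd : Odd d) (x : ZMod d) : 2 * x = 0 ↔ x = 0 := by
  constructor
  · intro h
    have h2 := congrArg (fun y => (2 : ZMod d)⁻¹ * y) h
    simpa [← mul_assoc, ZMod.inv_mul_of_unit _ (two_isUnit hodd)] using h2
  · rintro rfl; ring

lemma Disp_apply (p : ZMod d × ZMod d) (r s : ZMod d) :
    Disp d p r s = tp d (p.1 * p.2 + 2 * p.2 * s) * (if r = s + p.1 then 1 else 0) := rfl

lemma Disp_zero : Disp d 0 = 1 := by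
  ext r s
  simp [Disp_apply, tp_zero, Matrix.one_apply, eq_comm]

lemma Disp_mul (hodd : Odd d) (p q : ZMod d × ZMod d) :
    Disp d p * Disp d q = tp d (p.2 * q.1 - p.1 * q.2) • Disp d (p + q) := by
  ext r s
  rw [Matrix.mul_apply]
  rw [Finset.sum_eq_single (s + q.1)
    (fun t _ ht => by simp [Disp_apply, ht])
    (fun h => absurd (Finset.mem_univ _) h)]
  simp only [Disp_apply, Matrix.smul_apply, smul_eq_mul, Prod.fst_add, Prod.snd_add,
    eq_self_iff_true, if_true, ite_true, mul_one]
  by_cases hrr : r = s + (p.1 + q.1)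
  · rw [if_pos hrr, if_pos (show r = s + q.1 + p.1 by rw [hrr]; ring)]
    simp only [mul_one, one_mul]
    rw [← tp_add hodd, ← tp_add hodd]
    congr 1
    ring
  · rw [if_neg hrr, if_neg (show ¬ r = s + q.1 + p.1 from
      fun hh => hrr (by rw [hh]; ring))]
    ring

lemma Disp_conjTranspose (hodd : Odd d) (p : ZMod d × ZMod d) :
    (Disp d p)ᴴ = Disp d (-p) := by
  ext r s
  rw [Matrix.conjTranspose_apply, Disp_apply, Disp_apply]
  have hiff : (s = r + p.1) ↔ (r = s + (-p).1) := by
    simp only [Prod.fst_neg]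
    constructor
    · intro h; rw [h]; ring
    · intro h; rw [h]; ring
  rw [star_mul', show (star (if s = r + p.1 then (1:ℂ) else 0))
      = (if s = r + p.1 then (1:ℂ) else 0) by simp [apply_ite],
    star_tp hodd]
  by_cases h : s = r + p.1
  · rw [if_pos h, if_pos (hiff.mp h)]
    congr 1
    simp only [Prod.fst_neg, Prod.snd_neg]
    rw [h]
    ring
  · rw [if_neg h, if_neg (fun hh => h (hiff.mpr hh))]
    ring

lemma trace_Disp (hodd : Odd d) (p : ZMod d × ZMod d) :
    (Disp d p).trace = if p = 0 then (d : ℂ) else 0 := by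
  rw [Matrix.trace]
  by_cases h1 : p.1 = 0
  · have key : ∀ r : ZMod d, (Disp d p).diag r = tp d ((2 * p.2) * r) := by
      intro r
      rw [Matrix.diag_apply, Disp_apply, if_pos (show r = r + p.1 by rw [h1]; ring),
        mul_one, h1]
      congr 1
      ring
    rw [Finset.sum_congr rfl (fun r _ => key r), sum_tp hodd]
    by_cases h2 : p.2 = 0
    · rw [if_pos (show 2 * p.2 = 0 by rw [h2]; ring),
        if_pos (show p = 0 by rw [Prod.ext_iff]; exact ⟨h1, h2⟩)]
    · rw [if_neg (fun h => h2 ((two_mul_eq_zero_iff hodd p.2).mp h)),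
        if_neg (fun h => h2 (by rw [h]; rfl))]
  · have key : ∀ r : ZMod d, (Disp d p).diag r = 0 := by
      intro r
      rw [Matrix.diag_apply, Disp_apply,
        if_neg (fun h => h1 (left_eq_add.mp h)), mul_zero]
    rw [Finset.sum_congr rfl (fun r _ => key r), Finset.sum_const_zero,
      if_neg (fun h => h1 (by rw [h]; rfl))]


noncomputable def ff {d : ℕ} [NeZero d] (ψ : ZMod d → ℂ) (p : ZMod d × ZMod d) : ℂ :=
  cInner ψ ((Disp d p).mulVec ψ)

variable (ψ : ZMod d → ℂ)

lemma mulVec_Disp (p : ZMod d × ZMod d) (r : ZMod d) :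
    (Disp d p).mulVec ψ r = tp d (2 * p.2 * r - p.1 * p.2) * ψ (r - p.1) := by
  rw [Matrix.mulVec, dotProduct]
  rw [Finset.sum_eq_single (r - p.1)
    (fun s _ hs => by
      rw [Disp_apply, if_neg (fun h => hs (by rw [h]; ring)), mul_zero, zero_mul])
    (fun h => absurd (Finset.mem_univ _) h)]
  rw [Disp_apply, if_pos (show r = r - p.1 + p.1 by ring), mul_one]
  congr 2
  ring

/-- Sum formula for `f_p`. -/
lemma ff_apply (hodd : Odd d) (p : ZMod d × ZMod d) :
    ff ψ p = ∑ k : ZMod d, star (ψ k) * tp d (2 * p.2 * k - p.1 * p.2) * ψ (k - p.1) := by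
  rw [ff, cInner]
  refine Finset.sum_congr rfl (fun k _ => ?_)
  rw [mulVec_Disp ψ]
  ring

lemma ff_zero (hunit : cInner ψ ψ = 1) : ff ψ 0 = 1 := by
  rw [ff, Disp_zero, Matrix.one_mulVec, hunit]

lemma cInner_mulVec_left {n : Type*} [Fintype n] (A : Matrix n n ℂ) (x y : n → ℂ) :
    cInner (A.mulVec x) y = cInner x (Aᴴ.mulVec y) := by
  simp only [cInner, Matrix.mulVec, dotProduct, Matrix.conjTranspose_apply,
    Finset.mul_sum, Finset.sum_mul, star_sum, star_mul', star_star]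
  rw [Finset.sum_comm]
  refine Finset.sum_congr rfl (fun j _ => Finset.sum_congr rfl (fun k _ => ?_))
  ring

lemma cInner_smul_right {n : Type*} [Fintype n] (c : ℂ) (x y : n → ℂ) :
    cInner x (c • y) = c * cInner x y := by
  simp only [cInner, Pi.smul_apply, smul_eq_mul, Finset.mul_sum]
  exact Finset.sum_congr rfl (fun k _ => by ring)

lemma ff_neg (hodd : Odd d) (p : ZMod d × ZMod d) : ff ψ (-p) = star (ff ψ p) := by
  rw [ff, ff, ← Disp_conjTranspose hodd, ← cInner_mulVec_left]
  rw [cInner, cInner, star_sum]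
  exact Finset.sum_congr rfl (fun k _ => by simp [star_mul']; ring)

noncomputable def sigma' (p q : ZMod d × ZMod d) : ZMod d := p.2 * q.1 - p.1 * q.2

lemma inner_Disp_Disp (hodd : Odd d) (p q : ZMod d × ZMod d) :
    cInner ((Disp d p).mulVec ψ) ((Disp d q).mulVec ψ)
      = tp d (-(sigma' p q)) * ff ψ (q - p) := by
  rw [cInner_mulVec_left, Matrix.mulVec_mulVec, Disp_conjTranspose hodd, Disp_mul hodd,
    Matrix.smul_mulVec, cInner_smul_right]
  rw [show (-p + q) = q - p by ring]
  congr 2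
  simp only [sigma', Prod.fst_neg, Prod.snd_neg]
  ring

/-- The vector `Φ_q = (D_q ψ) ⊗ (D_{-q} ψ)`, in explicit form. -/
noncomputable def Phi (d : ℕ) [NeZero d] (ψ : ZMod d → ℂ) (q : ZMod d × ZMod d)
    (x : ZMod d × ZMod d) : ℂ :=
  tp d (2 * q.2 * x.1 - 2 * q.2 * x.2 - 2 * q.1 * q.2) * (ψ (x.1 - q.1) * ψ (x.2 + q.1))

lemma Phi_eq (hodd : Odd d) (q : ZMod d × ZMod d) (x : ZMod d × ZMod d) :
    Phi d ψ q x = (Disp d q).mulVec ψ x.1 * (Disp d (-q)).mulVec ψ x.2 := by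
  rw [Phi, mulVec_Disp, mulVec_Disp]
  simp only [Prod.fst_neg, Prod.snd_neg, sub_neg_eq_add]
  rw [mul_mul_mul_comm, ← tp_add hodd]
  congr 2
  ring

lemma cInner_Phi_Phi (hodd : Odd d) (p q : ZMod d × ZMod d) :
    cInner (Phi d ψ p) (Phi d ψ q)
      = tp d (-(sigma' p q)) * tp d (-(sigma' p q)) * (ff ψ (q - p) * star (ff ψ (q - p))) := by
  have hfac : cInner (Phi d ψ p) (Phi d ψ q)
      = cInner ((Disp d p).mulVec ψ) ((Disp d q).mulVec ψ)
        * cInner ((Disp d (-p)).mulVec ψ) ((Disp d (-q)).mulVec ψ) := by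
    simp only [cInner, Phi_eq ψ hodd, Fintype.sum_prod_type, star_mul']
    rw [Finset.sum_mul_sum]
    exact Finset.sum_congr rfl (fun a _ => Finset.sum_congr rfl (fun b _ => by ring))
  rw [hfac, inner_Disp_Disp ψ hodd, inner_Disp_Disp ψ hodd]
  have h1 : sigma' (-p) (-q) = sigma' p q := by
    simp only [sigma', Prod.fst_neg, Prod.snd_neg]; ring
  have h2 : (-q) - (-p) = -(q - p) := by ring
  rw [h1, h2, ff_neg ψ hodd]
  ring

/-- Key collapse: `∑_q ω^{⟨p,q⟩} Φ_q = d Φ_p`. -/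
lemma sum_Phi (hodd : Odd d) (p : ZMod d × ZMod d) (x : ZMod d × ZMod d) :
    ∑ q : ZMod d × ZMod d, tp d (2 * sigma' p q) * Phi d ψ q x
      = (d : ℂ) * Phi d ψ p x := by
  rw [Fintype.sum_prod_type]
  have hterm : ∀ q1 q2 : ZMod d,
      tp d (2 * sigma' p (q1, q2)) * Phi d ψ (q1, q2) x
        = (tp d (2 * p.2 * q1) * (ψ (x.1 - q1) * ψ (x.2 + q1)))
            * tp d ((2 * (x.1 - x.2 - p.1 - q1)) * q2) := by
    intro q1 q2
    rw [Phi, sigma']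
    dsimp only
    rw [← mul_assoc, ← tp_add hodd, mul_assoc (tp d (2 * p.2 * q1)),
      mul_comm (ψ (x.1 - q1) * ψ (x.2 + q1)), ← mul_assoc (tp d (2 * p.2 * q1)),
      ← tp_add hodd, mul_assoc]
    congr 2
    ring
  calc ∑ q1 : ZMod d, ∑ q2 : ZMod d,
        tp d (2 * sigma' p (q1, q2)) * Phi d ψ (q1, q2) x
      = ∑ q1 : ZMod d, (tp d (2 * p.2 * q1) * (ψ (x.1 - q1) * ψ (x.2 + q1)))
          * (if x.1 - x.2 - p.1 - q1 = 0 then (d : ℂ) else 0) := by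
        refine Finset.sum_congr rfl (fun q1 _ => ?_)
        rw [Finset.sum_congr rfl (fun q2 _ => hterm q1 q2), ← Finset.mul_sum,
          sum_tp hodd]
        simp only [two_mul_eq_zero_iff hodd]
    _ = (d : ℂ) * Phi d ψ p x := by
        rw [Finset.sum_eq_single (x.1 - x.2 - p.1)
          (fun q1 _ hq1 => by
            rw [if_neg (fun h => hq1 (by
              have := sub_eq_zero.mp h
              linear_combination -this)), mul_zero])
          (fun h => absurd (Finset.mem_univ _) h)]
        rw [if_pos (by ring), Phi]
        rw [show x.1 - (x.1 - x.2 - p.1) = x.2 + p.1 by ring,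
          show x.2 + (x.1 - x.2 - p.1) = x.1 - p.1 by ring,
          show (2*p.2*x.1 - 2*p.2*x.2 - 2*p.1*p.2 : ZMod d) = 2*p.2*(x.1-x.2-p.1) by ring]
        ring

lemma dplus1_ne_zero : ((d : ℂ) + 1) ≠ 0 := by
  have : ((d : ℂ) + 1) = ((d + 1 : ℕ) : ℂ) := by push_cast; ring
  rw [this]
  exact Nat.cast_ne_zero.mpr (Nat.succ_ne_zero d)

lemma ff_mul_star
    (hsic : ∀ p : ZMod d × ZMod d, p ≠ 0 →
      ‖cInner ψ ((Disp d p).mulVec ψ)‖ ^ 2 = 1 / (d + 1))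
    {p : ZMod d × ZMod d} (hp : p ≠ 0) :
    ff ψ p * star (ff ψ p) = 1 / ((d : ℂ) + 1) := by
  have h := hsic p hp
  have h2 : ff ψ p * star (ff ψ p) = ((‖ff ψ p‖ ^ 2 : ℝ) : ℂ) := by
    rw [show star (ff ψ p) = (starRingEnd ℂ) (ff ψ p) from rfl, Complex.mul_conj,
      Complex.sq_norm]
  rw [h2, show ‖ff ψ p‖ = ‖cInner ψ ((Disp d p).mulVec ψ)‖ from rfl, h]
  push_cast
  ring

/-- `B_p = D_p ⊗ D_p`. -/
noncomputable def BB (d : ℕ) [NeZero d] (p : ZMod d × ZMod d) :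
    Matrix (ZMod d × ZMod d) (ZMod d × ZMod d) ℂ :=
  Matrix.of fun x y => Disp d p x.1 y.1 * Disp d p x.2 y.2

lemma BB_apply (p : ZMod d × ZMod d) (x y : ZMod d × ZMod d) :
    BB d p x y = Disp d p x.1 y.1 * Disp d p x.2 y.2 := rfl

lemma BB_mul (hodd : Odd d) (p q : ZMod d × ZMod d) :
    BB d p * BB d q = tp d (2 * sigma' p q) • BB d (p + q) := by
  ext x y
  rw [Matrix.mul_apply]
  have : ∀ t : ZMod d × ZMod d, BB d p x t * BB d q t y
      = (Disp d p x.1 t.1 * Disp d q t.1 y.1) * (Disp d p x.2 t.2 * Disp d q t.2 y.2) := by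
    intro t; rw [BB_apply, BB_apply]; ring
  rw [Finset.sum_congr rfl (fun t _ => this t), Fintype.sum_prod_type, ]
  have hfac : ∀ t1 : ZMod d, ∑ t2 : ZMod d,
      (Disp d p x.1 t1 * Disp d q t1 y.1) * (Disp d p x.2 t2 * Disp d q t2 y.2)
      = (Disp d p x.1 t1 * Disp d q t1 y.1) * ((Disp d p * Disp d q) x.2 y.2) := by
    intro t1
    rw [← Finset.mul_sum, Matrix.mul_apply]
  rw [Finset.sum_congr rfl (fun t1 _ => hfac t1), ← Finset.sum_mul, ← Matrix.mul_apply]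
  rw [Disp_mul hodd, Matrix.smul_apply, Matrix.smul_apply, smul_eq_mul, smul_eq_mul,
    Matrix.smul_apply, smul_eq_mul, BB_apply]
  rw [show (2 : ZMod d) * sigma' p q = (p.2*q.1 - p.1*q.2) + (p.2*q.1 - p.1*q.2) by
    rw [sigma']; ring, tp_add hodd]
  ring

lemma trace_BB (hodd : Odd d) (p : ZMod d × ZMod d) :
    (BB d p).trace = if p = 0 then ((d : ℂ))^2 else 0 := by
  have : (BB d p).trace = (Disp d p).trace * (Disp d p).trace := by
    show ∑ x : ZMod d × ZMod d, BB d p x x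
      = (∑ a : ZMod d, Disp d p a a) * (∑ b : ZMod d, Disp d p b b)
    rw [Fintype.sum_prod_type, Finset.sum_mul_sum]
    exact Finset.sum_congr rfl fun a _ => Finset.sum_congr rfl fun b _ => rfl
  rw [this, trace_Disp hodd]
  split_ifs <;> ring

/-- rank-one pieces -/
noncomputable def VV (d : ℕ) [NeZero d] (ψ : ZMod d → ℂ) (p q : ZMod d × ZMod d) :
    Matrix (ZMod d × ZMod d) (ZMod d × ZMod d) ℂ :=
  Matrix.of fun x y => Phi d ψ p x * star (Phi d ψ q y)

lemma VV_apply (p q x y) : VV d ψ p q x y = Phi d ψ p x * star (Phi d ψ q y) := rfl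

lemma VV_mul (p q r t : ZMod d × ZMod d) :
    VV d ψ p q * VV d ψ r t = cInner (Phi d ψ q) (Phi d ψ r) • VV d ψ p t := by
  ext x y
  rw [Matrix.mul_apply, Matrix.smul_apply, smul_eq_mul, cInner, VV_apply, Finset.sum_mul]
  exact Finset.sum_congr rfl fun k _ => by rw [VV_apply, VV_apply]; ring

noncomputable def WW (d : ℕ) [NeZero d] (ψ : ZMod d → ℂ) :
    Matrix (ZMod d × ZMod d) (ZMod d × ZMod d) ℂ :=
  ∑ p : ZMod d × ZMod d, VV d ψ p p

lemma star_sum_Phi (hodd : Odd d) (p : ZMod d × ZMod d) (k : ZMod d × ZMod d) :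
    ∑ q : ZMod d × ZMod d, tp d (-(2 * sigma' p q)) * star (Phi d ψ q k)
      = (d : ℂ) * star (Phi d ψ p k) := by
  calc ∑ q : ZMod d × ZMod d, tp d (-(2 * sigma' p q)) * star (Phi d ψ q k)
      = star (∑ q : ZMod d × ZMod d, tp d (2 * sigma' p q) * Phi d ψ q k) := by
        rw [star_sum]
        exact Finset.sum_congr rfl fun q _ => by rw [star_mul', star_tp hodd]
    _ = star ((d : ℂ) * Phi d ψ p k) := by rw [sum_Phi ψ hodd]
    _ = (d : ℂ) * star (Phi d ψ p k) := by rw [star_mul']; simp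

lemma sum_VV (hodd : Odd d) (p : ZMod d × ZMod d) :
    ∑ q : ZMod d × ZMod d, tp d (-(2 * sigma' p q)) • VV d ψ p q
      = (d : ℂ) • VV d ψ p p := by
  ext x y
  rw [Matrix.sum_apply, Matrix.smul_apply, smul_eq_mul, VV_apply]
  calc ∑ q : ZMod d × ZMod d, (tp d (-(2 * sigma' p q)) • VV d ψ p q) x y
      = Phi d ψ p x * ∑ q : ZMod d × ZMod d, tp d (-(2 * sigma' p q)) * star (Phi d ψ q y) := by
        rw [Finset.mul_sum]
        exact Finset.sum_congr rfl fun q _ => by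
          rw [Matrix.smul_apply, smul_eq_mul, VV_apply]; ring
    _ = Phi d ψ p x * ((d : ℂ) * star (Phi d ψ p y)) := by rw [star_sum_Phi ψ hodd]
    _ = (d : ℂ) * (Phi d ψ p x * star (Phi d ψ p y)) := by ring

lemma cInner_Phi_value (hodd : Odd d) (hunit : cInner ψ ψ = 1)
    (hsic : ∀ p : ZMod d × ZMod d, p ≠ 0 →
      ‖cInner ψ ((Disp d p).mulVec ψ)‖ ^ 2 = 1 / (d + 1))
    (p q : ZMod d × ZMod d) :
    cInner (Phi d ψ p) (Phi d ψ q)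
      = (1 / ((d : ℂ) + 1)) * tp d (-(2 * sigma' p q))
        + (if q = p then (d : ℂ) / ((d : ℂ) + 1) else 0) := by
  rw [cInner_Phi_Phi ψ hodd]
  rw [show tp d (-(sigma' p q)) * tp d (-(sigma' p q)) = tp d (-(2 * sigma' p q)) by
    rw [← tp_add hodd]; congr 1; ring]
  by_cases h : q = p
  · subst h
    rw [if_pos rfl, sub_self, ff_zero ψ hunit,
      show sigma' q q = 0 by rw [sigma']; ring]
    simp only [neg_zero, mul_zero, tp_zero, star_one]
    have := dplus1_ne_zero (d := d)
    field_simp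
    ring
  · rw [if_neg h, ff_mul_star ψ hsic (sub_ne_zero.mpr h)]
    ring

lemma WW_sq (hodd : Odd d) (hunit : cInner ψ ψ = 1)
    (hsic : ∀ p : ZMod d × ZMod d, p ≠ 0 →
      ‖cInner ψ ((Disp d p).mulVec ψ)‖ ^ 2 = 1 / (d + 1)) :
    WW d ψ * WW d ψ = ((2 * (d : ℂ)) / ((d : ℂ) + 1)) • WW d ψ := by
  have expand : WW d ψ * WW d ψ
      = ∑ p : ZMod d × ZMod d, ∑ q : ZMod d × ZMod d,
          cInner (Phi d ψ p) (Phi d ψ q) • VV d ψ p q := by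
    rw [WW, Finset.sum_mul_sum]
    exact Finset.sum_congr rfl fun p _ => Finset.sum_congr rfl fun q _ => VV_mul ψ p p q q
  rw [expand]
  have split : ∀ p q : ZMod d × ZMod d,
      cInner (Phi d ψ p) (Phi d ψ q) • VV d ψ p q
        = (1 / ((d : ℂ) + 1)) • (tp d (-(2 * sigma' p q)) • VV d ψ p q)
          + (if q = p then ((d : ℂ) / ((d : ℂ) + 1)) • VV d ψ p q else 0) := by
    intro p q
    rw [cInner_Phi_value ψ hodd hunit hsic, add_smul, smul_smul]
    congr 1
    split_ifs <;> simp
  simp_rw [split, Finset.sum_add_distrib]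
  have first : ∑ p : ZMod d × ZMod d, ∑ q : ZMod d × ZMod d,
      (1 / ((d : ℂ) + 1)) • (tp d (-(2 * sigma' p q)) • VV d ψ p q)
      = ((d : ℂ) / ((d : ℂ) + 1)) • WW d ψ := by
    have h1 : ∀ p : ZMod d × ZMod d, ∑ q : ZMod d × ZMod d,
        (1 / ((d : ℂ) + 1)) • (tp d (-(2 * sigma' p q)) • VV d ψ p q)
        = (1 / ((d : ℂ) + 1)) • ((d : ℂ) • VV d ψ p p) := by
      intro p
      rw [← Finset.smul_sum, sum_VV ψ hodd]
    rw [Finset.sum_congr rfl fun p _ => h1 p, ← Finset.smul_sum, WW, Finset.smul_sum,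
      Finset.smul_sum]
    exact Finset.sum_congr rfl fun p _ => by rw [smul_smul]; congr 1; ring
  have second : ∑ p : ZMod d × ZMod d, ∑ q : ZMod d × ZMod d,
      (if q = p then ((d : ℂ) / ((d : ℂ) + 1)) • VV d ψ p q else 0)
      = ((d : ℂ) / ((d : ℂ) + 1)) • WW d ψ := by
    have h2 : ∀ p : ZMod d × ZMod d, ∑ q : ZMod d × ZMod d,
        (if q = p then ((d : ℂ) / ((d : ℂ) + 1)) • VV d ψ p q else 0)
        = ((d : ℂ) / ((d : ℂ) + 1)) • VV d ψ p p := by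
      intro p
      rw [Finset.sum_ite_eq' Finset.univ p (fun q => ((d : ℂ) / ((d : ℂ) + 1)) • VV d ψ p q)]
      simp
    rw [Finset.sum_congr rfl fun p _ => h2 p, WW, Finset.smul_sum]
  rw [first, second, ← add_smul]
  congr 1
  have := dplus1_ne_zero (d := d)
  field_simp
  ring

noncomputable def WWalt (d : ℕ) [NeZero d] (ψ : ZMod d → ℂ) :
    Matrix (ZMod d × ZMod d) (ZMod d × ZMod d) ℂ :=
  ∑ p : ZMod d × ZMod d, (ff ψ p)^2 • BB d (-p)

lemma ff_sq (hodd : Odd d) (p : ZMod d × ZMod d) :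
    (ff ψ p)^2 = ∑ a : ZMod d, ∑ b : ZMod d,
      (star (ψ a) * star (ψ b)) * (ψ (a - p.1) * ψ (b - p.1))
        * tp d (2*p.2*a + 2*p.2*b - 2*p.1*p.2) := by
  rw [sq, ff_apply ψ hodd, Finset.sum_mul_sum]
  refine Finset.sum_congr rfl fun a _ => Finset.sum_congr rfl fun b _ => ?_
  rw [show (star (ψ a) * tp d (2*p.2*a - p.1*p.2) * ψ (a - p.1))
        * (star (ψ b) * tp d (2*p.2*b - p.1*p.2) * ψ (b - p.1))
      = (star (ψ a) * star (ψ b)) * (ψ (a - p.1) * ψ (b - p.1))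
        * (tp d (2*p.2*a - p.1*p.2) * tp d (2*p.2*b - p.1*p.2)) by ring,
    ← tp_add hodd]
  congr 2
  ring

lemma WW_apply (x y : ZMod d × ZMod d) :
    WW d ψ x y = ∑ p : ZMod d × ZMod d, Phi d ψ p x * star (Phi d ψ p y) := by
  rw [WW, Matrix.sum_apply]
  exact Finset.sum_congr rfl fun p _ => rfl

lemma WW_apply_eq (hodd : Odd d) (x y : ZMod d × ZMod d) :
    WW d ψ x y = (if 2*(x.1 - x.2 - y.1 + y.2) = 0 then (d : ℂ) else 0)
      * ∑ a : ZMod d, ψ (x.1 - a) * ψ (x.2 + a)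
          * (star (ψ (y.1 - a)) * star (ψ (y.2 + a))) := by
  rw [WW_apply]
  have hterm : ∀ p : ZMod d × ZMod d, Phi d ψ p x * star (Phi d ψ p y)
      = tp d ((2*(x.1 - x.2 - y.1 + y.2)) * p.2)
        * (ψ (x.1 - p.1) * ψ (x.2 + p.1) * (star (ψ (y.1 - p.1)) * star (ψ (y.2 + p.1)))) := by
    intro p
    rw [Phi, Phi, star_mul', star_tp hodd]
    rw [mul_mul_mul_comm, ← tp_add hodd, star_mul']
    rw [show tp d (2 * p.2 * x.1 - 2 * p.2 * x.2 - 2 * p.1 * p.2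
          + -(2 * p.2 * y.1 - 2 * p.2 * y.2 - 2 * p.1 * p.2))
        = tp d ((2*(x.1 - x.2 - y.1 + y.2)) * p.2) by congr 1; ring]
  rw [Finset.sum_congr rfl fun p _ => hterm p, Fintype.sum_prod_type]
  have hin : ∀ p1 : ZMod d,
      (∑ p2 : ZMod d, tp d ((2*(x.1 - x.2 - y.1 + y.2)) * p2)
        * (ψ (x.1 - p1) * ψ (x.2 + p1) * (star (ψ (y.1 - p1)) * star (ψ (y.2 + p1)))))
      = (if 2*(x.1 - x.2 - y.1 + y.2) = 0 then (d : ℂ) else 0)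
        * (ψ (x.1 - p1) * ψ (x.2 + p1) * (star (ψ (y.1 - p1)) * star (ψ (y.2 + p1)))) := by
    intro p1
    rw [← Finset.sum_mul, sum_tp hodd]
  rw [Finset.sum_congr rfl fun p1 _ => hin p1, ← Finset.mul_sum]

lemma WWalt_apply_eq (hodd : Odd d) (x y : ZMod d × ZMod d) :
    WWalt d ψ x y = (if 2*(x.1 - x.2 - y.1 + y.2) = 0 then (d : ℂ) else 0)
      * ∑ a : ZMod d, ψ (x.1 - a) * ψ (x.2 + a)
          * (star (ψ (y.1 - a)) * star (ψ (y.2 + a))) := by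
  have hBB : ∀ p : ZMod d × ZMod d, BB d (-p) x y
      = tp d (2*p.1*p.2 - 2*p.2*y.1 - 2*p.2*y.2)
        * ((if x.1 = y.1 - p.1 then (1:ℂ) else 0) * (if x.2 = y.2 - p.1 then (1:ℂ) else 0)) := by
    intro p
    rw [BB_apply, Disp_apply, Disp_apply]
    simp only [Prod.fst_neg, Prod.snd_neg]
    rw [mul_mul_mul_comm, ← tp_add hodd]
    simp only [← sub_eq_add_neg]
    congr 2
    ring
  have entry : WWalt d ψ x y = ∑ p : ZMod d × ZMod d, (ff ψ p)^2 * BB d (-p) x y := by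
    rw [WWalt, Matrix.sum_apply]
    exact Finset.sum_congr rfl fun p _ => rfl
  rw [entry, Finset.sum_congr rfl fun p _ => by rw [hBB p], Fintype.sum_prod_type]
  have hin : ∀ p1 : ZMod d,
      (∑ p2 : ZMod d, (ff ψ (p1, p2))^2 * (tp d (2*p1*p2 - 2*p2*y.1 - 2*p2*y.2)
          * ((if x.1 = y.1 - p1 then (1:ℂ) else 0) * (if x.2 = y.2 - p1 then (1:ℂ) else 0))))
      = ((d : ℂ) * ∑ a : ZMod d, (star (ψ a) * star (ψ (y.1 + y.2 - a)))
            * (ψ (a - p1) * ψ (y.1 + y.2 - a - p1)))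
        * ((if x.1 = y.1 - p1 then (1:ℂ) else 0) * (if x.2 = y.2 - p1 then (1:ℂ) else 0)) := by
    intro p1
    rw [show (∑ p2 : ZMod d, (ff ψ (p1, p2))^2 * (tp d (2*p1*p2 - 2*p2*y.1 - 2*p2*y.2)
          * ((if x.1 = y.1 - p1 then (1:ℂ) else 0) * (if x.2 = y.2 - p1 then (1:ℂ) else 0))))
        = (∑ p2 : ZMod d, (ff ψ (p1, p2))^2 * tp d (2*p1*p2 - 2*p2*y.1 - 2*p2*y.2))
          * ((if x.1 = y.1 - p1 then (1:ℂ) else 0) * (if x.2 = y.2 - p1 then (1:ℂ) else 0)) by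
      rw [Finset.sum_mul]
      exact Finset.sum_congr rfl fun p2 _ => by ring]
    congr 1
    calc ∑ p2 : ZMod d, (ff ψ (p1, p2))^2 * tp d (2*p1*p2 - 2*p2*y.1 - 2*p2*y.2)
        = ∑ p2 : ZMod d, ∑ a : ZMod d, ∑ b : ZMod d,
            (star (ψ a) * star (ψ b)) * (ψ (a - p1) * ψ (b - p1))
              * tp d ((2*(a + b - y.1 - y.2)) * p2) := by
          refine Finset.sum_congr rfl fun p2 _ => ?_
          rw [ff_sq ψ hodd, Finset.sum_mul]
          refine Finset.sum_congr rfl fun a _ => ?_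
          rw [Finset.sum_mul]
          refine Finset.sum_congr rfl fun b _ => ?_
          dsimp only
          rw [mul_assoc, ← tp_add hodd]
          congr 2
          ring
      _ = ∑ a : ZMod d, ∑ b : ZMod d,
            (star (ψ a) * star (ψ b)) * (ψ (a - p1) * ψ (b - p1))
              * (if 2*(a + b - y.1 - y.2) = 0 then (d : ℂ) else 0) := by
          rw [Finset.sum_comm]
          refine Finset.sum_congr rfl fun a _ => ?_
          rw [Finset.sum_comm]
          refine Finset.sum_congr rfl fun b _ => ?_
          rw [← Finset.mul_sum, sum_tp hodd]
      _ = ∑ a : ZMod d, (star (ψ a) * star (ψ (y.1 + y.2 - a)))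
            * (ψ (a - p1) * ψ (y.1 + y.2 - a - p1)) * (d : ℂ) := by
          refine Finset.sum_congr rfl fun a _ => ?_
          rw [Finset.sum_eq_single (y.1 + y.2 - a)
            (fun b _ hb => by
              rw [if_neg (fun h => hb (by
                have h2 := (two_mul_eq_zero_iff hodd _).mp h
                first
                | linear_combination h2
                | linear_combination -h2)), mul_zero])
            (fun h => absurd (Finset.mem_univ _) h)]
          rw [if_pos (by ring)]
      _ = (d : ℂ) * ∑ a : ZMod d, (star (ψ a) * star (ψ (y.1 + y.2 - a)))
            * (ψ (a - p1) * ψ (y.1 + y.2 - a - p1)) := by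
          rw [Finset.mul_sum]
          exact Finset.sum_congr rfl fun a _ => by ring
  rw [Finset.sum_congr rfl fun p1 _ => hin p1]
  rw [Finset.sum_eq_single (y.1 - x.1)
    (fun p1 _ hp1 => by
      rw [if_neg (fun h => hp1 (by first | linear_combination h | linear_combination -h)),
        zero_mul, mul_zero])
    (fun h => absurd (Finset.mem_univ _) h)]
  rw [if_pos (by ring)]
  by_cases hc : 2*(x.1 - x.2 - y.1 + y.2) = 0
  · have hc2 : x.1 - x.2 - y.1 + y.2 = 0 := (two_mul_eq_zero_iff hodd _).mp hc
    rw [if_pos hc, if_pos (show x.2 = y.2 - (y.1 - x.1) by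
      first | linear_combination hc2 | linear_combination -hc2)]
    rw [mul_one, mul_one]
    congr 1
    refine Fintype.sum_equiv (Equiv.subLeft y.1) _ _ fun a => ?_
    simp only [Equiv.subLeft_apply]
    rw [show y.1 - (y.1 - a) = a by ring,
      show y.2 + (y.1 - a) = y.1 + y.2 - a by ring,
      show x.1 - (y.1 - a) = a - (y.1 - x.1) by ring,
      show x.2 + (y.1 - a) = y.1 + y.2 - a - (y.1 - x.1) by
        first | linear_combination hc2 | linear_combination -hc2]
    ring
  · rw [if_neg hc, if_neg (show ¬ x.2 = y.2 - (y.1 - x.1) from fun h => hc (by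
      first | linear_combination 2*h | linear_combination -2*h |
        linear_combination (2:ZMod d)*h | linear_combination (-2:ZMod d)*h)),
      mul_zero, mul_zero, zero_mul]

lemma WW_eq_WWalt (hodd : Odd d) : WW d ψ = WWalt d ψ := by
  ext x y
  rw [WW_apply_eq ψ hodd, WWalt_apply_eq ψ hodd]

/-- `T(s) = ∑_p f_p² f_{s-p}² ω^{⟨p,s⟩}`. -/
noncomputable def TT (d : ℕ) [NeZero d] (ψ : ZMod d → ℂ) (s : ZMod d × ZMod d) : ℂ :=
  ∑ p : ZMod d × ZMod d, (ff ψ p)^2 * (ff ψ (s - p))^2 * tp d (2 * sigma' p s)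

lemma sigma'_self_neg (s : ZMod d × ZMod d) : sigma' s (-s) = 0 := by
  simp only [sigma', Prod.fst_neg, Prod.snd_neg]; ring

lemma trace_BB_mul_WWalt (hodd : Odd d) (s : ZMod d × ZMod d) :
    (BB d s * WWalt d ψ).trace = (d : ℂ)^2 * (ff ψ s)^2 := by
  rw [WWalt, Matrix.mul_sum, Matrix.trace_sum]
  have hterm : ∀ p : ZMod d × ZMod d,
      (BB d s * (ff ψ p)^2 • BB d (-p)).trace
        = (ff ψ p)^2 * (tp d (2 * sigma' s (-p)) * (if s + -p = 0 then (d:ℂ)^2 else 0)) := by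
    intro p
    rw [Matrix.mul_smul, Matrix.trace_smul, BB_mul hodd, Matrix.trace_smul, trace_BB hodd]
    simp [smul_eq_mul]
  rw [Finset.sum_congr rfl fun p _ => hterm p]
  rw [Finset.sum_eq_single s
    (fun p _ hp => by
      rw [if_neg (fun h => hp (by first | linear_combination h | linear_combination -h)),
        mul_zero, mul_zero])
    (fun h => absurd (Finset.mem_univ _) h)]
  rw [if_pos (by ring), sigma'_self_neg, mul_zero, tp_zero]
  ring

lemma trace_BB_mul_WWalt_sq (hodd : Odd d) (s : ZMod d × ZMod d) :
    (BB d s * (WWalt d ψ * WWalt d ψ)).trace = (d : ℂ)^2 * TT d ψ s := by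
  have expand : WWalt d ψ * WWalt d ψ
      = ∑ p : ZMod d × ZMod d, ∑ q : ZMod d × ZMod d,
          ((ff ψ p)^2 * (ff ψ q)^2 * tp d (2 * sigma' p q)) • BB d (-(p + q)) := by
    rw [WWalt, Finset.sum_mul_sum]
    refine Finset.sum_congr rfl fun p _ => Finset.sum_congr rfl fun q _ => ?_
    rw [Matrix.smul_mul, Matrix.mul_smul, BB_mul hodd, smul_smul, smul_smul]
    rw [show (-p) + (-q) = -(p + q) by ring, show sigma' (-p) (-q) = sigma' p q by
      simp only [sigma', Prod.fst_neg, Prod.snd_neg]; ring]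
    try (congr 1; ring)
  rw [expand]
  rw [Matrix.mul_sum, Matrix.trace_sum]
  have houter : ∀ p : ZMod d × ZMod d,
      (BB d s * ∑ q : ZMod d × ZMod d,
          ((ff ψ p)^2 * (ff ψ q)^2 * tp d (2 * sigma' p q)) • BB d (-(p + q))).trace
      = (ff ψ p)^2 * (ff ψ (s - p))^2 * tp d (2 * sigma' p s) * (d:ℂ)^2 := by
    intro p
    rw [Matrix.mul_sum, Matrix.trace_sum]
    have hterm : ∀ q : ZMod d × ZMod d,
        (BB d s * ((ff ψ p)^2 * (ff ψ q)^2 * tp d (2 * sigma' p q)) • BB d (-(p + q))).trace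
        = ((ff ψ p)^2 * (ff ψ q)^2 * tp d (2 * sigma' p q))
            * (tp d (2 * sigma' s (-(p + q))) * (if s + -(p + q) = 0 then (d:ℂ)^2 else 0)) := by
      intro q
      rw [Matrix.mul_smul, Matrix.trace_smul, BB_mul hodd, Matrix.trace_smul, trace_BB hodd]
      simp [smul_eq_mul]
    rw [Finset.sum_congr rfl fun q _ => hterm q]
    rw [Finset.sum_eq_single (s - p)
      (fun q _ hq => by
        rw [if_neg (fun h => hq (by first | linear_combination h | linear_combination -h)),
          mul_zero, mul_zero])
      (fun h => absurd (Finset.mem_univ _) h)]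
    simp only [show p + (s - p) = s from by ring]
    rw [if_pos (by ring), sigma'_self_neg, mul_zero, tp_zero,
      show sigma' p (s - p) = sigma' p s from by
        simp only [sigma', Prod.fst_sub, Prod.snd_sub]; ring]
    ring
  rw [Finset.sum_congr rfl fun p _ => houter p, TT, Finset.mul_sum]
  exact Finset.sum_congr rfl fun p _ => by ring


lemma T_identity (hodd : Odd d) (hunit : cInner ψ ψ = 1)
    (hsic : ∀ p : ZMod d × ZMod d, p ≠ 0 →
      ‖cInner ψ ((Disp d p).mulVec ψ)‖ ^ 2 = 1 / (d + 1))
    (s : ZMod d × ZMod d) :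
    TT d ψ s = ((2*(d:ℂ))/((d:ℂ)+1)) * (ff ψ s)^2 := by
  have h := WW_sq ψ hodd hunit hsic
  rw [WW_eq_WWalt ψ hodd] at h
  have h2 := congrArg (fun M => (BB d s * M).trace) h
  rw [trace_BB_mul_WWalt_sq ψ hodd s, Matrix.mul_smul, Matrix.trace_smul,
    trace_BB_mul_WWalt ψ hodd s, smul_eq_mul] at h2
  have hd2 : ((d:ℂ)^2) ≠ 0 := pow_ne_zero _ (Nat.cast_ne_zero.mpr (NeZero.ne d))
  refine mul_left_cancel₀ hd2 ?_
  rw [h2]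
  ring

lemma sqPhase_eq (hunit : cInner ψ ψ = 1) (q : ZMod d × ZMod d) :
    sqPhase d ψ q = ((d:ℂ)+1) * (ff ψ q)^2 - (d:ℂ) * (if q = 0 then 1 else 0) := by
  rw [sqPhase]
  split_ifs with h
  · subst h
    rw [ff_zero ψ hunit]
    ring
  · rw [show cInner ψ ((Disp d q).mulVec ψ) ^ 2 = (ff ψ q)^2 from rfl]
    ring

lemma star_sqPhase (hodd : Odd d) (q : ZMod d × ZMod d) :
    star (sqPhase d ψ q) = sqPhase d ψ (-q) := by
  rw [sqPhase, sqPhase]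
  by_cases h : q = 0
  · subst h; simp
  · rw [if_neg h, if_neg (fun hh => h (neg_eq_zero.mp hh))]
    rw [star_mul', star_pow,
      show star (cInner ψ ((Disp d q).mulVec ψ)) = star (ff ψ q) from rfl,
      ← ff_neg ψ hodd]
    congr 1
    simp

lemma Hmap_zero : Hmap d 0 = 0 := by
  simp [Hmap]

lemma Hmap_neg (p : ZMod d × ZMod d) : Hmap d (-p) = -(Hmap d p) := by
  simp only [Hmap, Prod.fst_neg, Prod.snd_neg, Prod.neg_mk]
  rw [mul_neg]

lemma Hmap_sub (p q : ZMod d × ZMod d) : Hmap d (p - q) = Hmap d p - Hmap d q := by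
  simp only [Hmap, Prod.fst_sub, Prod.snd_sub, Prod.mk_sub_mk]
  rw [mul_sub]

/-- the inverse of `Hmap` as an equiv. -/
noncomputable def eH (d : ℕ) [NeZero d] (hodd : Odd d) :
    (ZMod d × ZMod d) ≃ (ZMod d × ZMod d) where
  toFun u := (u.1, 2 * u.2)
  invFun := Hmap d
  left_inv u := by
    simp only [Hmap]
    rw [← mul_assoc, ZMod.inv_mul_of_unit _ (two_isUnit hodd), one_mul]
  right_inv u := by
    simp only [Hmap]
    rw [← mul_assoc, ZMod.mul_inv_of_unit _ (two_isUnit hodd), one_mul]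

lemma Hmap_eH (hodd : Odd d) (u : ZMod d × ZMod d) : Hmap d (eH d hodd u) = u :=
  (eH d hodd).left_inv u

lemma Hmap_eq_zero_iff (hodd : Odd d) (s : ZMod d × ZMod d) : Hmap d s = 0 ↔ s = 0 := by
  constructor
  · intro h
    have h1 : s.1 = 0 := congrArg Prod.fst h
    have h2 : (2:ZMod d)⁻¹ * s.2 = 0 := congrArg Prod.snd h
    have h3 : s.2 = 0 := by
      have h4 := congrArg (fun z => (2:ZMod d) * z) h2
      simpa [← mul_assoc, ZMod.mul_inv_of_unit _ (two_isUnit hodd)] using h4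
    rw [Prod.ext_iff]
    exact ⟨h1, h3⟩
  · rintro rfl; exact Hmap_zero

/-- the main scalar identity -/
lemma main_scalar (hodd : Odd d) (hunit : cInner ψ ψ = 1)
    (hsic : ∀ p : ZMod d × ZMod d, p ≠ 0 →
      ‖cInner ψ ((Disp d p).mulVec ψ)‖ ^ 2 = 1 / (d + 1))
    (v : ZMod d × ZMod d) :
    ∑ u : ZMod d × ZMod d, sqPhase d ψ u * sqPhase d ψ (v - u) * tp d (2 * sigma' u v)
      = if v = 0 then ((d:ℂ))^2 else 0 := by
  have hsummand : ∀ u : ZMod d × ZMod d,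
      sqPhase d ψ u * sqPhase d ψ (v - u) * tp d (2 * sigma' u v)
      = ((d:ℂ)+1)^2 * ((ff ψ u)^2 * (ff ψ (v-u))^2 * tp d (2 * sigma' u v))
        - ((d:ℂ)*((d:ℂ)+1)) * ((if u = 0 then (1:ℂ) else 0) * ((ff ψ (v-u))^2 * tp d (2 * sigma' u v)))
        - ((d:ℂ)*((d:ℂ)+1)) * ((if v - u = 0 then (1:ℂ) else 0) * ((ff ψ u)^2 * tp d (2 * sigma' u v)))
        + (d:ℂ)^2 * ((if u = 0 then (1:ℂ) else 0) * ((if v - u = 0 then (1:ℂ) else 0) * tp d (2 * sigma' u v))) := by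
    intro u
    rw [sqPhase_eq ψ hunit, sqPhase_eq ψ hunit]
    ring
  rw [Finset.sum_congr rfl fun u _ => hsummand u]
  rw [Finset.sum_add_distrib, Finset.sum_sub_distrib, Finset.sum_sub_distrib,
    ← Finset.mul_sum, ← Finset.mul_sum, ← Finset.mul_sum, ← Finset.mul_sum]
  have S1 : ∑ u : ZMod d × ZMod d, (ff ψ u)^2 * (ff ψ (v-u))^2 * tp d (2 * sigma' u v)
      = TT d ψ v := rfl
  have S2 : ∑ u : ZMod d × ZMod d,
      (if u = 0 then (1:ℂ) else 0) * ((ff ψ (v-u))^2 * tp d (2 * sigma' u v))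
      = (ff ψ v)^2 := by
    rw [Finset.sum_eq_single (0 : ZMod d × ZMod d)
      (fun u _ hu => by rw [if_neg hu, zero_mul])
      (fun h => absurd (Finset.mem_univ _) h)]
    rw [if_pos rfl, one_mul, sub_zero,
      show sigma' (0 : ZMod d × ZMod d) v = 0 by simp [sigma'], mul_zero, tp_zero, mul_one]
  have S3 : ∑ u : ZMod d × ZMod d,
      (if v - u = 0 then (1:ℂ) else 0) * ((ff ψ u)^2 * tp d (2 * sigma' u v))
      = (ff ψ v)^2 := by
    rw [Finset.sum_eq_single v
      (fun u _ hu => by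
        rw [if_neg (fun h => hu (by first | linear_combination h | linear_combination -h)),
          zero_mul])
      (fun h => absurd (Finset.mem_univ _) h)]
    rw [if_pos (by ring), one_mul,
      show sigma' v v = 0 by simp [sigma']; ring, mul_zero, tp_zero, mul_one]
  have S4 : ∑ u : ZMod d × ZMod d,
      (if u = 0 then (1:ℂ) else 0) * ((if v - u = 0 then (1:ℂ) else 0) * tp d (2 * sigma' u v))
      = if v = 0 then (1:ℂ) else 0 := by
    rw [Finset.sum_eq_single (0 : ZMod d × ZMod d)
      (fun u _ hu => by rw [if_neg hu, zero_mul])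
      (fun h => absurd (Finset.mem_univ _) h)]
    rw [if_pos rfl, one_mul, sub_zero,
      show sigma' (0 : ZMod d × ZMod d) v = 0 by simp [sigma'], mul_zero, tp_zero, mul_one]
  rw [S1, S2, S3, S4, T_identity ψ hodd hunit hsic]
  have hne := dplus1_ne_zero (d := d)
  split_ifs with hv
  · field_simp
    ring
  · field_simp
    ring

lemma eH_apply (hodd : Odd d) (u : ZMod d × ZMod d) : eH d hodd u = (u.1, 2 * u.2) := rfl

lemma coeff_vanish (hodd : Odd d) (hunit : cInner ψ ψ = 1)
    (hsic : ∀ p : ZMod d × ZMod d, p ≠ 0 →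
      ‖cInner ψ ((Disp d p).mulVec ψ)‖ ^ 2 = 1 / (d + 1))
    (s : ZMod d × ZMod d) :
    ∑ p : ZMod d × ZMod d,
        (sqPhase d ψ (Hmap d p) * sqPhase d ψ (Hmap d (s - p))) * tp d (sigma' p s)
      = if s = 0 then ((d:ℂ))^2 else 0 := by
  have key : ∀ u : ZMod d × ZMod d,
      sqPhase d ψ u * sqPhase d ψ (Hmap d s - u) * tp d (2 * sigma' u (Hmap d s))
      = (sqPhase d ψ (Hmap d (eH d hodd u)) * sqPhase d ψ (Hmap d (s - eH d hodd u)))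
          * tp d (sigma' (eH d hodd u) s) := by
    intro u
    rw [Hmap_eH hodd, Hmap_sub, Hmap_eH hodd]
    congr 2
    have h22 : (2:ZMod d) * ((2:ZMod d)⁻¹ * s.2) = s.2 := by
      rw [← mul_assoc, ZMod.mul_inv_of_unit _ (two_isUnit hodd), one_mul]
    simp only [sigma', Hmap, eH_apply]
    first
    | linear_combination u.1 * h22
    | linear_combination -u.1 * h22
    | linear_combination (2:ZMod d) * u.1 * h22
    | linear_combination (-2:ZMod d) * u.1 * h22
  calc ∑ p : ZMod d × ZMod d,
        (sqPhase d ψ (Hmap d p) * sqPhase d ψ (Hmap d (s - p))) * tp d (sigma' p s)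
      = ∑ u : ZMod d × ZMod d,
          sqPhase d ψ u * sqPhase d ψ (Hmap d s - u) * tp d (2 * sigma' u (Hmap d s)) :=
        (Fintype.sum_equiv (eH d hodd) _ _ key).symm
    _ = if Hmap d s = 0 then ((d:ℂ))^2 else 0 := main_scalar ψ hodd hunit hsic (Hmap d s)
    _ = if s = 0 then ((d:ℂ))^2 else 0 := if_congr (Hmap_eq_zero_iff hodd s) rfl rfl

lemma dC_ne_zero : (d : ℂ) ≠ 0 := Nat.cast_ne_zero.mpr (NeZero.ne d)

theorem gP_sq (hodd : Odd d) (hunit : cInner ψ ψ = 1)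
    (hsic : ∀ p : ZMod d × ZMod d, p ≠ 0 →
      ‖cInner ψ ((Disp d p).mulVec ψ)‖ ^ 2 = 1 / (d + 1)) :
    genParity d ψ * genParity d ψ = 1 := by
  rw [genParity, Matrix.smul_mul, Matrix.mul_smul, smul_smul, Finset.sum_mul_sum]
  have hterm : ∀ p q : ZMod d × ZMod d,
      (sqPhase d ψ (Hmap d p) • Disp d (-p)) * (sqPhase d ψ (Hmap d q) • Disp d (-q))
      = ((sqPhase d ψ (Hmap d p) * sqPhase d ψ (Hmap d q)) * tp d (sigma' p q))
          • Disp d (-(p+q)) := by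
    intro p q
    rw [Matrix.smul_mul, Matrix.mul_smul, Disp_mul hodd, smul_smul, smul_smul]
    rw [show (-p) + (-q) = -(p+q) by ring,
      show (-p).2 * (-q).1 - (-p).1 * (-q).2 = sigma' p q by
        simp only [sigma', Prod.fst_neg, Prod.snd_neg]; ring]
    try (congr 1; ring)
  rw [Finset.sum_congr rfl fun p _ => Finset.sum_congr rfl fun q _ => hterm p q]
  have hreidx : ∀ p : ZMod d × ZMod d,
      (∑ q : ZMod d × ZMod d,
        ((sqPhase d ψ (Hmap d p) * sqPhase d ψ (Hmap d q)) * tp d (sigma' p q))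
          • Disp d (-(p+q)))
      = ∑ t : ZMod d × ZMod d,
        ((sqPhase d ψ (Hmap d p) * sqPhase d ψ (Hmap d (t - p))) * tp d (sigma' p t))
          • Disp d (-t) := by
    intro p
    refine Fintype.sum_equiv (Equiv.addLeft p) _ _ fun q => ?_
    simp only [Equiv.coe_addLeft, add_sub_cancel_left]
    rw [show sigma' p (p + q) = sigma' p q by
      simp only [sigma', Prod.fst_add, Prod.snd_add]; ring]
  rw [Finset.sum_congr rfl fun p _ => hreidx p, Finset.sum_comm]
  have hcol : ∀ t : ZMod d × ZMod d,
      (∑ p : ZMod d × ZMod d,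
        ((sqPhase d ψ (Hmap d p) * sqPhase d ψ (Hmap d (t - p))) * tp d (sigma' p t))
          • Disp d (-t))
      = (if t = 0 then ((d:ℂ))^2 else 0) • Disp d (-t) := by
    intro t
    rw [← Finset.sum_smul, coeff_vanish ψ hodd hunit hsic t]
  rw [Finset.sum_congr rfl fun t _ => hcol t]
  rw [Finset.sum_eq_single (0 : ZMod d × ZMod d)
    (fun t _ ht => by rw [if_neg ht, zero_smul])
    (fun h => absurd (Finset.mem_univ _) h)]
  rw [if_pos rfl, neg_zero, Disp_zero, smul_smul]
  rw [show (d:ℂ)⁻¹ * (d:ℂ)⁻¹ * ((d:ℂ))^2 = 1 by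
    have h := dC_ne_zero (d := d)
    field_simp [pow_two]]
  rw [one_smul]

theorem gP_herm (hodd : Odd d) : (genParity d ψ)ᴴ = genParity d ψ := by
  rw [genParity, Matrix.conjTranspose_smul, Matrix.conjTranspose_sum]
  rw [show (star ((d:ℂ)⁻¹) : ℂ) = (d:ℂ)⁻¹ by simp]
  congr 1
  have hterm : ∀ p : ZMod d × ZMod d,
      (sqPhase d ψ (Hmap d p) • Disp d (-p))ᴴ
        = sqPhase d ψ (Hmap d (-p)) • Disp d (- -p) := by
    intro p
    rw [Matrix.conjTranspose_smul, Disp_conjTranspose hodd, star_sqPhase ψ hodd, ← Hmap_neg]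
  rw [Finset.sum_congr rfl fun p _ => hterm p]
  exact Fintype.sum_equiv (Equiv.neg _) _ _ fun p => by simp

theorem gP_trace (hodd : Odd d) : (genParity d ψ).trace = 1 := by
  rw [genParity, Matrix.trace_smul, Matrix.trace_sum]
  have hterm : ∀ p : ZMod d × ZMod d,
      (sqPhase d ψ (Hmap d p) • Disp d (-p)).trace
        = sqPhase d ψ (Hmap d p) * (if -p = 0 then (d:ℂ) else 0) := by
    intro p
    rw [Matrix.trace_smul, trace_Disp hodd, smul_eq_mul]
  rw [Finset.sum_congr rfl fun p _ => hterm p]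
  rw [Finset.sum_eq_single (0 : ZMod d × ZMod d)
    (fun p _ hp => by
      rw [if_neg (fun h => hp (neg_eq_zero.mp h)), mul_zero])
    (fun h => absurd (Finset.mem_univ _) h)]
  rw [if_pos neg_zero, Hmap_zero, show sqPhase d ψ 0 = 1 from if_pos rfl, one_mul,
    smul_eq_mul, inv_mul_cancel₀ (dC_ne_zero (d := d))]

theorem eigen_dims (hodd : Odd d)
    (hsq : genParity d ψ * genParity d ψ = 1) (htr : (genParity d ψ).trace = 1) :
    Module.finrank ℂ
      (Module.End.eigenspace (Matrix.toLin' (genParity d ψ)) 1) = (d + 1) / 2 ∧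
    Module.finrank ℂ
      (Module.End.eigenspace (Matrix.toLin' (genParity d ψ)) (-1)) = (d - 1) / 2 := by
  set P := genParity d ψ with hP
  set φ := Matrix.toLin' P with hφ
  have hid : φ.comp φ = LinearMap.id := by
    rw [hφ, ← Matrix.toLin'_mul, hsq, Matrix.toLin'_one]
  have hpt : ∀ x, φ (φ x) = x := fun x => by
    have := congrArg (fun g => g x) hid
    simpa using this
  have hmem1 : ∀ x, ((2:ℂ)⁻¹ • (x + φ x)) ∈ Module.End.eigenspace φ 1 := by
    intro x
    rw [Module.End.mem_eigenspace_iff, _root_.map_smul, map_add, hpt]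
    module
  have hmem2 : ∀ x, ((2:ℂ)⁻¹ • (x - φ x)) ∈ Module.End.eigenspace φ (-1) := by
    intro x
    rw [Module.End.mem_eigenspace_iff, _root_.map_smul, map_sub, hpt]
    module
  have hcompl : IsCompl (Module.End.eigenspace φ 1) (Module.End.eigenspace φ (-1)) := by
    constructor
    · rw [Submodule.disjoint_def]
      intro x h1 h2
      rw [Module.End.mem_eigenspace_iff] at h1 h2
      have h3 : (2:ℂ) • x = 0 := by
        have h4 : (1:ℂ) • x - (-1:ℂ) • x = 0 := by rw [← h1, ← h2]; simp
        calc (2:ℂ) • x = (1:ℂ) • x - (-1:ℂ) • x := by module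
          _ = 0 := h4
      rcases smul_eq_zero.mp h3 with h | h
      · norm_num at h
      · exact h
    · rw [codisjoint_iff, eq_top_iff]
      intro x _
      have hx : x = (2:ℂ)⁻¹ • (x + φ x) + (2:ℂ)⁻¹ • (x - φ x) := by module
      rw [hx]
      exact Submodule.add_mem_sup (hmem1 x) (hmem2 x)
  have hdim : Module.finrank ℂ (ZMod d → ℂ) = d := by
    rw [Module.finrank_pi]
    exact ZMod.card d
  have hsum : Module.finrank ℂ (Module.End.eigenspace φ 1)
      + Module.finrank ℂ (Module.End.eigenspace φ (-1)) = d := by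
    rw [Submodule.finrank_add_eq_of_isCompl hcompl, hdim]
  set f : (ZMod d → ℂ) →ₗ[ℂ] (ZMod d → ℂ) := (2:ℂ)⁻¹ • (LinearMap.id + φ) with hf
  have hfx : ∀ x, f x = (2:ℂ)⁻¹ • (x + φ x) := fun x => rfl
  have hproj : LinearMap.IsProj (Module.End.eigenspace φ 1) f := by
    constructor
    · intro x
      rw [hfx]
      exact hmem1 x
    · intro x hx
      rw [Module.End.mem_eigenspace_iff] at hx
      rw [hfx, hx]
      module
  have htrf : LinearMap.trace ℂ (ZMod d → ℂ) f
      = (Module.finrank ℂ (Module.End.eigenspace φ 1) : ℂ) := hproj.trace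
  have htrφ : LinearMap.trace ℂ (ZMod d → ℂ) φ = 1 := by
    rw [hφ, LinearMap.trace_eq_matrix_trace ℂ (Pi.basisFun ℂ (ZMod d)),
      LinearMap.toMatrix_eq_toMatrix', LinearMap.toMatrix'_toLin']
    exact htr
  have h2f : (2:ℂ) • f = LinearMap.id + φ := by
    rw [hf, smul_smul]
    norm_num
  have htr2 : (2:ℂ) * (Module.finrank ℂ (Module.End.eigenspace φ 1) : ℂ) = (d:ℂ) + 1 := by
    have h5 := congrArg (LinearMap.trace ℂ (ZMod d → ℂ)) h2f
    rw [_root_.map_smul, map_add, htrf, htrφ, LinearMap.trace_id, hdim] at h5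
    simpa using h5
  have ha : 2 * Module.finrank ℂ (Module.End.eigenspace φ 1) = d + 1 := by
    exact_mod_cast htr2
  have hmod : d % 2 = 1 := Nat.odd_iff.mp hodd
  constructor
  · omega
  · omega


end SICAux


/-- For a SIC fiducial `ψ₀` in odd dimension `d`, the generalised parity
operator `P_θ` is Hermitian, squares to the identity, and has trace `1`;
its `+1` eigenspace has dimension `(d+1)/2` and its `-1` eigenspace has
dimension `(d-1)/2`. -/
theorem genParity_hermitian_involution
    (d : ℕ) [NeZero d] (hodd : Odd d) (hd : 3 ≤ d)
    (ψ₀ : ZMod d → ℂ)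
    (hunit : cInner ψ₀ ψ₀ = 1)
    (hsic : ∀ p : ZMod d × ZMod d, p ≠ 0 →
      ‖cInner ψ₀ ((Disp d p).mulVec ψ₀)‖ ^ 2 = 1 / (d + 1)) :
    (genParity d ψ₀)ᴴ = genParity d ψ₀ ∧
    genParity d ψ₀ * genParity d ψ₀ = 1 ∧
    (genParity d ψ₀).trace = 1 ∧
    Module.finrank ℂ
      (Module.End.eigenspace (Matrix.toLin' (genParity d ψ₀)) 1) = (d + 1) / 2 ∧
    Module.finrank ℂ
      (Module.End.eigenspace (Matrix.toLin' (genParity d ψ₀)) (-1)) = (d - 1) / 2 := by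
  obtain ⟨h1, h2⟩ := SICAux.eigen_dims ψ₀ hodd
    (SICAux.gP_sq ψ₀ hodd hunit hsic) (SICAux.gP_trace ψ₀ hodd)
  exact ⟨SICAux.gP_herm ψ₀ hodd, SICAux.gP_sq ψ₀ hodd hunit hsic,
    SICAux.gP_trace ψ₀ hodd, h1, h2⟩
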